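/- Suppose a group Γ acts harmonically on a graph G. Then 2g(G) − 2 = |Γ|·(2g(G/Γ) − 2 + R), where R = Σ_{y ∈ V(G/Γ)} [2(1 − 1/r_y) + w_y] is the ramification number. -/

import Mathlib

open scoped Classical

/-- A finite connected multigraph without loop edges. -/
structure Multigraph where
  V : Type
  E : Type
  [fintypeV : Fintype V]
  [fintypeE : Fintype E]
  ends : E → Sym2 V
  loopless : ∀ e : E, ¬ (ends e).IsDiag
  connected : (SimpleGraph.fromRel fun x y : V => ∃ e : E, ends e = s(x, y)).Connected

attribute [instance] Multigraph.fintypeV Multigraph.fintypeE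

namespace Multigraph

/-- The genus (first Betti number, cyclomatic number) of a multigraph. -/
def genus (G : Multigraph) : ℤ :=
  (Fintype.card G.E : ℤ) - (Fintype.card G.V : ℤ) + 1

/-- A cycle in a multigraph, given as a nonempty set of edges such that every vertex is
incident to either 0 or 2 of its edges. -/
def IsCycleSet (G : Multigraph) (C : Set G.E) : Prop :=
  C.Nonempty ∧ ∀ x : G.V,
    Nat.card {e : G.E // e ∈ C ∧ x ∈ G.ends e} = 0 ∨
    Nat.card {e : G.E // e ∈ C ∧ x ∈ G.ends e} = 2

end Multigraph

/-- A morphism of multigraphs: vertices go to vertices, and each edge goes either to an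
edge joining the images of its endpoints, or to the common image of its endpoints
(in which case the edge is *vertical*). -/
structure Morphism (G G' : Multigraph) where
  vmap : G.V → G'.V
  emap : G.E → G'.E ⊕ G'.V
  compat : ∀ e : G.E,
    (∀ e', emap e = Sum.inl e' → G'.ends e' = (G.ends e).map vmap) ∧
    (∀ v, emap e = Sum.inr v → (G.ends e).map vmap = Sym2.diag v)

namespace Morphism

/-- A morphism is harmonic if for every vertex `x`, the number of edges incident to `x`
mapping to a given edge `e'` incident to `φ(x)` is independent of the choice of `e'`. -/
def Harmonic {G G' : Multigraph} (φ : Morphism G G') : Prop :=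
  ∀ (x : G.V) (e₁ e₂ : G'.E), φ.vmap x ∈ G'.ends e₁ → φ.vmap x ∈ G'.ends e₂ →
    Nat.card {e : G.E // x ∈ G.ends e ∧ φ.emap e = Sum.inl e₁} =
    Nat.card {e : G.E // x ∈ G.ends e ∧ φ.emap e = Sum.inl e₂}

/-- A morphism is nonconstant if its image is not a single vertex. -/
def Nonconstant {G G' : Multigraph} (φ : Morphism G G') : Prop :=
  ∃ x y : G.V, φ.vmap x ≠ φ.vmap y

/-- Composition of morphisms of multigraphs. -/
def comp {G₁ G₂ G₃ : Multigraph} (ψ : Morphism G₂ G₃) (φ : Morphism G₁ G₂) :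
    Morphism G₁ G₃ where
  vmap := ψ.vmap ∘ φ.vmap
  emap e := Sum.elim ψ.emap (fun v => Sum.inr (ψ.vmap v)) (φ.emap e)
  compat e := by
    constructor
    · intro e'' h
      rcases hφ : φ.emap e with e' | v
      · simp only [hφ, Sum.elim_inl] at h
        have h1 := (φ.compat e).1 e' hφ
        have h2 := (ψ.compat e').1 e'' h
        rw [h2, h1, Sym2.map_map]
      · simp only [hφ, Sum.elim_inr] at h
        simp at h
    · intro v h
      rcases hφ : φ.emap e with e' | v₀
      · simp only [hφ, Sum.elim_inl] at h
        have h1 := (φ.compat e).1 e' hφ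
        have h2 := (ψ.compat e').2 v h
        rw [← Sym2.map_map, ← h1]
        exact h2
      · simp only [hφ, Sum.elim_inr, Sum.inr.injEq] at h
        have h1 := (φ.compat e).2 v₀ hφ
        subst h
        rw [← Sym2.map_map, h1]
        rfl
end Morphism

/-- A group of automorphisms of a multigraph `G` (a faithful action of `Γ` on `G` by
automorphisms, i.e. a subgroup of `Aut(G)`). -/
structure GraphAction (Γ : Type) [Group Γ] (G : Multigraph) where
  actV : Γ →* Equiv.Perm G.V
  actE : Γ →* Equiv.Perm G.E
  ends_map : ∀ (γ : Γ) (e : G.E), G.ends (actE γ e) = (G.ends e).map (actV γ)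
  faithful : ∀ γ : Γ, (∀ x : G.V, actV γ x = x) → (∀ e : G.E, actE γ e = e) → γ = 1

namespace GraphAction

variable {Γ : Type} [Group Γ] {G : Multigraph}

/-- Two vertices lie in the same `Δ`-orbit. -/
def vrel (A : GraphAction Γ G) (Δ : Subgroup Γ) (x y : G.V) : Prop :=
  ∃ δ ∈ Δ, A.actV δ x = y

/-- Two edges lie in the same `Δ`-orbit. -/
def erel (A : GraphAction Γ G) (Δ : Subgroup Γ) (e f : G.E) : Prop :=
  ∃ δ ∈ Δ, A.actE δ e = f

/-- The setoid of `Δ`-orbits of vertices. -/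
def vSetoid (A : GraphAction Γ G) (Δ : Subgroup Γ) : Setoid G.V where
  r := A.vrel Δ
  iseqv := by
    constructor
    · intro x; exact ⟨1, Δ.one_mem, by simp⟩
    · rintro x y ⟨δ, hδ, h⟩
      refine ⟨δ⁻¹, Δ.inv_mem hδ, ?_⟩
      rw [map_inv, ← h]
      exact Equiv.symm_apply_apply _ _
    · rintro x y z ⟨δ₁, h1, e1⟩ ⟨δ₂, h2, e2⟩
      refine ⟨δ₂ * δ₁, Δ.mul_mem h2 h1, ?_⟩
      rw [map_mul]
      simp [Equiv.Perm.mul_apply, e1, e2]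

/-- The setoid of `Δ`-orbits of edges. -/
def eSetoid (A : GraphAction Γ G) (Δ : Subgroup Γ) : Setoid G.E where
  r := A.erel Δ
  iseqv := by
    constructor
    · intro e; exact ⟨1, Δ.one_mem, by simp⟩
    · rintro e f ⟨δ, hδ, h⟩
      refine ⟨δ⁻¹, Δ.inv_mem hδ, ?_⟩
      rw [map_inv, ← h]
      exact Equiv.symm_apply_apply _ _
    · rintro e f k ⟨δ₁, h1, e1⟩ ⟨δ₂, h2, e2⟩
      refine ⟨δ₂ * δ₁, Δ.mul_mem h2 h1, ?_⟩
      rw [map_mul]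
      simp [Equiv.Perm.mul_apply, e1, e2]

/-- An edge is `Δ`-vertical if its two endpoints lie in the same `Δ`-orbit (so it is
contracted by the quotient morphism `G → G/Δ`). -/
def Vertical (A : GraphAction Γ G) (Δ : Subgroup Γ) (e : G.E) : Prop :=
  ∃ x y : G.V, G.ends e = s(x, y) ∧ A.vrel Δ x y

/-- The vertex set of the quotient graph `G/Δ`: the `Δ`-orbits of vertices. -/
abbrev quotV (A : GraphAction Γ G) (Δ : Subgroup Γ) : Type :=
  Quotient (A.vSetoid Δ)

/-- The edge set of the quotient graph `G/Δ`: the `Δ`-orbits of non-vertical edges. -/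
abbrev quotE (A : GraphAction Γ G) (Δ : Subgroup Γ) : Type :=
  Quotient ((A.eSetoid Δ).comap (Subtype.val : {e : G.E // ¬ A.Vertical Δ e} → G.E))

/-- The genus of the quotient graph `G/Δ`. -/
noncomputable def quotGenus (A : GraphAction Γ G) (Δ : Subgroup Γ) : ℤ :=
  (Nat.card (A.quotE Δ) : ℤ) - (Nat.card (A.quotV Δ) : ℤ) + 1

/-- The order of the stabilizer `Δ_x` of a vertex `x`. -/
noncomputable def stabOrder (A : GraphAction Γ G) (Δ : Subgroup Γ) (x : G.V) : ℕ :=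
  Nat.card {γ : Γ // γ ∈ Δ ∧ A.actV γ x = x}

/-- The vertical multiplicity of a vertex `x`: the number of `Δ`-vertical edges
incident to `x`. -/
noncomputable def vertMult (A : GraphAction Γ G) (Δ : Subgroup Γ) (x : G.V) : ℕ :=
  Nat.card {e : G.E // x ∈ G.ends e ∧ A.Vertical Δ e}

/-- `r_y = |Δ_x|` for a vertex `y` of the quotient `G/Δ` and any `x` in the fiber over `y`. -/
noncomputable def r (A : GraphAction Γ G) (Δ : Subgroup Γ) (y : A.quotV Δ) : ℕ :=
  A.stabOrder Δ (Quotient.out y)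

/-- `w_y = v(x)/|Δ_x|` for a vertex `y` of the quotient `G/Δ` and any `x` in the fiber. -/
noncomputable def w (A : GraphAction Γ G) (Δ : Subgroup Γ) (y : A.quotV Δ) : ℕ :=
  A.vertMult Δ (Quotient.out y) / A.r Δ y

/-- The ramification number `R = Σ_y [2(1 - 1/r_y) + w_y]` of the quotient map `G → G/Δ`. -/
noncomputable def ram (A : GraphAction Γ G) (Δ : Subgroup Γ) : ℚ :=
  ∑ᶠ y : A.quotV Δ, (2 * (1 - 1 / (A.r Δ y : ℚ)) + (A.w Δ y : ℚ))

/-- A vertex `y` of the quotient `G/Δ` is a branch point if `2(1 - 1/r_y) + w_y > 0`. -/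
def IsBranch (A : GraphAction Γ G) (Δ : Subgroup Γ) (y : A.quotV Δ) : Prop :=
  0 < 2 * (1 - 1 / (A.r Δ y : ℚ)) + (A.w Δ y : ℚ)

/-- The quotient morphism `φ_Δ : G → G/Δ` is harmonic: for every vertex `x` of `G` and
every pair of quotient edges incident to the image of `x`, the numbers of preimages
incident to `x` agree. -/
def QuotHarmonic (A : GraphAction Γ G) (Δ : Subgroup Γ) : Prop :=
  ∀ (x : G.V) (e₁ e₂ : G.E), ¬ A.Vertical Δ e₁ → ¬ A.Vertical Δ e₂ →
    (∃ v ∈ G.ends e₁, A.vrel Δ x v) → (∃ v ∈ G.ends e₂, A.vrel Δ x v) →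
    Nat.card {e : G.E // x ∈ G.ends e ∧ A.erel Δ e e₁} =
    Nat.card {e : G.E // x ∈ G.ends e ∧ A.erel Δ e e₂}

/-- The quotient morphism `φ_Δ : G → G/Δ` is non-degenerate: no neighborhood `x(1)` is
contracted to a vertex, i.e. every vertex has a neighbor outside its `Δ`-orbit. -/
def QuotNondeg (A : GraphAction Γ G) (Δ : Subgroup Γ) : Prop :=
  ∀ x : G.V, ∃ e : G.E, x ∈ G.ends e ∧ ∃ y ∈ G.ends e, ¬ A.vrel Δ x y

/-- `Γ` acts harmonically on `G` if for every subgroup `Δ ≤ Γ` the quotient morphism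
`φ_Δ : G → G/Δ` is harmonic and non-degenerate. -/
def ActsHarmonically (A : GraphAction Γ G) : Prop :=
  ∀ Δ : Subgroup Γ, A.QuotHarmonic Δ ∧ A.QuotNondeg Δ

/-- The quotient map `G → G/Δ` is horizontally unramified: all vertex stabilizers in `Δ`
are trivial. -/
def HorizUnramified (A : GraphAction Γ G) (Δ : Subgroup Γ) : Prop :=
  ∀ (x : G.V) (γ : Γ), γ ∈ Δ → A.actV γ x = x → γ = 1

end GraphAction

/-- `M g` is the maximal order of a group acting harmonically on a graph of genus `g`. -/
noncomputable def M (g : ℕ) : ℕ :=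
  sSup {n : ℕ | ∃ (Γ : Type) (i : Group Γ) (G : Multigraph) (A : @GraphAction Γ i G),
    @GraphAction.ActsHarmonically Γ i G A ∧ G.genus = (g : ℤ) ∧ Nat.card Γ = n}

section RiemannHurwitzProof

namespace GraphAction

variable {Γ : Type} [Group Γ] {G : Multigraph}

/-- The subgroup of elements fixing a vertex. -/
def fixV (A : GraphAction Γ G) (z : G.V) : Subgroup Γ where
  carrier := {δ | A.actV δ z = z}
  one_mem' := by simp
  mul_mem' := by
    intro a b ha hb
    simp only [Set.mem_setOf_eq] at *
    rw [map_mul, Equiv.Perm.mul_apply, hb, ha]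
  inv_mem' := by
    intro a ha
    simp only [Set.mem_setOf_eq] at *
    rw [map_inv]
    exact Equiv.Perm.inv_eq_iff_eq.mpr ha.symm

@[simp] lemma mem_fixV (A : GraphAction Γ G) (z : G.V) (γ : Γ) :
    γ ∈ A.fixV z ↔ A.actV γ z = z := Iff.rfl

/-- The subgroup of elements fixing an edge. -/
def fixE (A : GraphAction Γ G) (h : G.E) : Subgroup Γ where
  carrier := {δ | A.actE δ h = h}
  one_mem' := by simp
  mul_mem' := by
    intro a b ha hb
    simp only [Set.mem_setOf_eq] at *
    rw [map_mul, Equiv.Perm.mul_apply, hb, ha]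
  inv_mem' := by
    intro a ha
    simp only [Set.mem_setOf_eq] at *
    rw [map_inv]
    exact Equiv.Perm.inv_eq_iff_eq.mpr ha.symm

@[simp] lemma mem_fixE (A : GraphAction Γ G) (h : G.E) (γ : Γ) :
    γ ∈ A.fixE h ↔ A.actE γ h = h := Iff.rfl

lemma mem_ends_act (A : GraphAction Γ G) (γ : Γ) {x : G.V} {e : G.E}
    (hx : x ∈ G.ends e) : A.actV γ x ∈ G.ends (A.actE γ e) := by
  rw [A.ends_map]
  exact Sym2.mem_map.mpr ⟨x, hx, rfl⟩

/-- Key rigidity lemma: if `γ` fixes a vertex `z` together with some edge at `z`,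
then it fixes every edge at `z`. -/
lemma fix_all_at (A : GraphAction Γ G) (hA : A.ActsHarmonically) (γ : Γ) (z : G.V)
    (hz : A.actV γ z = z) (h : G.E) (hzh : z ∈ G.ends h) (hh : A.actE γ h = h) :
    ∀ f : G.E, z ∈ G.ends f → A.actE γ f = f := by
  intro f hzf
  set Δ : Subgroup Γ := Subgroup.zpowers γ with hΔ
  have hγΔ : γ ∈ Δ := Subgroup.mem_zpowers γ
  have hfixV : ∀ δ ∈ Δ, A.actV δ z = z := fun δ hδ =>
    (Subgroup.zpowers_le.mpr ((A.mem_fixV z γ).mpr hz)) hδ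
  have hfixE : ∀ δ ∈ Δ, A.actE δ h = h := fun δ hδ =>
    (Subgroup.zpowers_le.mpr ((A.mem_fixE h γ).mpr hh)) hδ
  -- every edge at z is non-Δ-vertical
  have hnv : ∀ g : G.E, z ∈ G.ends g → ¬ A.Vertical Δ g := by
    rintro g hzg ⟨a, b, hab, δ, hδ, hba⟩
    rw [hab] at hzg
    rcases Sym2.mem_iff.mp hzg with rfl | rfl
    · rw [hfixV δ hδ] at hba
      exact G.loopless g (by rw [hab, ← hba]; exact Sym2.mk_isDiag_iff.mpr rfl)
    · have ha : a = z := by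
        have h1 : A.actV δ⁻¹ z = z := hfixV δ⁻¹ (Δ.inv_mem hδ)
        have h2 : A.actV δ⁻¹ (A.actV δ a) = a := by
          rw [map_inv]; exact Equiv.symm_apply_apply _ _
        rw [hba, h1] at h2
        exact h2.symm
      exact G.loopless g (by rw [hab, ha]; exact Sym2.mk_isDiag_iff.mpr rfl)
  have hvrelz : A.vrel Δ z z := ⟨1, Δ.one_mem, by simp⟩
  have harm := (hA Δ).1 z h f (hnv h hzh) (hnv f hzf) ⟨z, hzh, hvrelz⟩ ⟨z, hzf, hvrelz⟩
  -- the fiber of h at z is a singleton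
  haveI : Unique {e : G.E // z ∈ G.ends e ∧ A.erel Δ e h} := by
    refine ⟨⟨⟨h, hzh, ⟨1, Δ.one_mem, by simp⟩⟩⟩, ?_⟩
    rintro ⟨e, hze, δ, hδ, hde⟩
    apply Subtype.ext
    have : A.actE δ e = A.actE δ h := by rw [hde, hfixE δ hδ]
    exact (A.actE δ).injective this
  have hcard1 : Nat.card {e : G.E // z ∈ G.ends e ∧ A.erel Δ e h} = 1 := Nat.card_unique
  rw [hcard1] at harm
  have hsub : Subsingleton {e : G.E // z ∈ G.ends e ∧ A.erel Δ e f} :=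
    (Nat.card_eq_one_iff_unique.mp harm.symm).1
  have m1 : z ∈ G.ends (A.actE γ f) := by
    have := A.mem_ends_act γ hzf
    rwa [hz] at this
  have m2 : A.erel Δ (A.actE γ f) f := by
    refine ⟨γ⁻¹, Δ.inv_mem hγΔ, ?_⟩
    rw [map_inv]; exact Equiv.symm_apply_apply _ _
  have := hsub.elim ⟨A.actE γ f, m1, m2⟩ ⟨f, hzf, ⟨1, Δ.one_mem, by simp⟩⟩
  exact congrArg Subtype.val this

/-- Rigidity: an element fixing a vertex and an edge at that vertex is trivial. -/
lemma eq_one_of_fixes (A : GraphAction Γ G) (hA : A.ActsHarmonically) (γ : Γ) (x : G.V)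
    (g : G.E) (hx : A.actV γ x = x) (hxg : x ∈ G.ends g) (hg : A.actE γ g = g) :
    γ = 1 := by
  set P : G.V → Prop := fun z => A.actV γ z = z ∧ ∀ f : G.E, z ∈ G.ends f → A.actE γ f = f
    with hP
  have hPx : P x := ⟨hx, A.fix_all_at hA γ x hx g hxg hg⟩
  have step : ∀ a b : G.V,
      (SimpleGraph.fromRel fun x y : G.V => ∃ e : G.E, G.ends e = s(x, y)).Adj a b →
      P a → P b := by
    intro a b hadj hPa
    obtain ⟨ha, hafix⟩ := hPa
    rw [SimpleGraph.fromRel_adj] at hadj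
    obtain ⟨hne, he⟩ := hadj
    have hee : ∃ e : G.E, G.ends e = s(a, b) := by
      rcases he with ⟨e, he⟩ | ⟨e, he⟩
      · exact ⟨e, he⟩
      · exact ⟨e, by rw [he, Sym2.eq_swap]⟩
    obtain ⟨e, he⟩ := hee
    have hae : a ∈ G.ends e := by rw [he]; exact Sym2.mem_mk_left _ _
    have hbe : b ∈ G.ends e := by rw [he]; exact Sym2.mem_mk_right _ _
    have hfe : A.actE γ e = e := hafix e hae
    have hb : A.actV γ b = b := by
      have h1 : A.actV γ b ∈ G.ends e := by
        have := A.mem_ends_act γ hbe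
        rwa [hfe] at this
      rw [he, Sym2.mem_iff] at h1
      rcases h1 with h1 | h1
      · exact absurd ((A.actV γ).injective (h1.trans ha.symm)) (Ne.symm hne)
      · exact h1
    exact ⟨hb, A.fix_all_at hA γ b hb e hbe hfe⟩
  have main : ∀ z : G.V, P z := by
    intro z
    obtain ⟨w⟩ := G.connected.preconnected x z
    have aux : ∀ (a b : G.V)
        (_ : (SimpleGraph.fromRel fun x y : G.V => ∃ e : G.E, G.ends e = s(x, y)).Walk a b),
        P a → P b := by
      intro a b w
      induction w with
      | nil => exact id
      | cons h p ih => intro pa; exact ih (step _ _ h pa)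
    exact aux x z w hPx
  refine A.faithful γ (fun z => (main z).1) (fun e => ?_)
  have hex : ∀ s : Sym2 G.V, ∃ a b, s = s(a, b) := fun s =>
    Sym2.ind (fun a b => ⟨a, b, rfl⟩) s
  obtain ⟨a, b, he⟩ := hex (G.ends e)
  exact (main a).2 e (by rw [he]; exact Sym2.mem_mk_left _ _)

lemma finiteGamma (A : GraphAction Γ G) : Finite Γ := by
  have hinj : Function.Injective (A.actV.prod A.actE) := by
    rw [injective_iff_map_eq_one]
    intro γ h
    rw [Prod.ext_iff] at h
    refine A.faithful γ (fun x => ?_) (fun e => ?_)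
    · rw [show A.actV γ = 1 from h.1]; rfl
    · rw [show A.actE γ = 1 from h.2]; rfl
  exact Finite.of_injective _ hinj

lemma card_eq_sum_fibers {S T : Type} [Fintype S] [Fintype T] (f : S → T) :
    Nat.card S = ∑ q : T, Nat.card {s : S // f s = q} := by
  rw [Nat.card_eq_fintype_card, ← Fintype.card_congr (Equiv.sigmaFiberEquiv f),
    Fintype.card_sigma]
  exact Finset.sum_congr rfl fun q _ => (Nat.card_eq_fintype_card).symm

lemma fiber_card_of_free {H S : Type} [Group H] [Finite H] (act : H →* Equiv.Perm S)
    (hfree : ∀ (γ : H) (s : S), act γ s = s → γ = 1)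
    (st : Setoid S) (hst : ∀ a b : S, st.r a b ↔ ∃ γ : H, act γ a = b)
    (q : Quotient st) :
    Nat.card {s : S // Quotient.mk st s = q} = Nat.card H := by
  symm
  have hmem : ∀ γ : H, Quotient.mk st (act γ (Quotient.out q)) = q := by
    intro γ
    have hr : st.r (act γ (Quotient.out q)) (Quotient.out q) := by
      refine (hst _ _).mpr ⟨γ⁻¹, ?_⟩
      rw [map_inv]
      exact Equiv.symm_apply_apply _ _
    calc Quotient.mk st (act γ (Quotient.out q))
        = Quotient.mk st (Quotient.out q) := Quotient.sound hr
      _ = q := Quotient.out_eq q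
  apply Nat.card_eq_of_bijective (fun γ : H =>
    (⟨act γ (Quotient.out q), hmem γ⟩ : {s : S // Quotient.mk st s = q}))
  constructor
  · intro γ γ' h
    have h1 : act γ (Quotient.out q) = act γ' (Quotient.out q) := congrArg Subtype.val h
    have h2 : act (γ'⁻¹ * γ) (Quotient.out q) = Quotient.out q := by
      rw [map_mul, Equiv.Perm.mul_apply, h1, map_inv]
      exact Equiv.symm_apply_apply _ _
    have := hfree _ _ h2
    rwa [inv_mul_eq_one, eq_comm] at this
  · rintro ⟨s, hs⟩
    have hr : st.r s (Quotient.out q) :=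
      Quotient.exact (hs.trans (Quotient.out_eq q).symm)
    obtain ⟨γ, hγ⟩ := (hst _ _).mp hr
    refine ⟨γ⁻¹, Subtype.ext (show act γ⁻¹ (Quotient.out q) = s from ?_)⟩
    rw [map_inv, ← hγ]
    exact Equiv.symm_apply_apply _ _

lemma card_dvd_of_free {H S : Type} [Group H] [Finite H] [Fintype S]
    (act : H →* Equiv.Perm S)
    (hfree : ∀ (γ : H) (s : S), act γ s = s → γ = 1) :
    Nat.card H ∣ Nat.card S := by
  classical
  set st : Setoid S :=
    { r := fun a b => ∃ γ : H, act γ a = b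
      iseqv := by
        constructor
        · exact fun a => ⟨1, by simp⟩
        · rintro a b ⟨γ, h⟩
          refine ⟨γ⁻¹, ?_⟩
          rw [map_inv, ← h]
          exact Equiv.symm_apply_apply _ _
        · rintro a b c ⟨γ₁, h1⟩ ⟨γ₂, h2⟩
          refine ⟨γ₂ * γ₁, ?_⟩
          rw [map_mul, Equiv.Perm.mul_apply, h1, h2] } with hstdef
  letI : Fintype (Quotient st) := Fintype.ofFinite _
  rw [card_eq_sum_fibers (Quotient.mk st)]
  have : ∀ q : Quotient st, Nat.card {s : S // Quotient.mk st s = q} = Nat.card H :=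
    fun q => fiber_card_of_free act hfree st (fun a b => Iff.rfl) q
  rw [Finset.sum_congr rfl fun q _ => this q, Finset.sum_const, smul_eq_mul]
  exact dvd_mul_left _ _

lemma mem_ends_act_iff (A : GraphAction Γ G) (γ : Γ) (x : G.V) (e : G.E) :
    x ∈ G.ends e ↔ A.actV γ x ∈ G.ends (A.actE γ e) := by
  constructor
  · exact fun h => A.mem_ends_act γ h
  · intro h
    rw [A.ends_map, Sym2.mem_map] at h
    obtain ⟨a, ha, hax⟩ := h
    rwa [(A.actV γ).injective hax] at ha

lemma vertical_act (A : GraphAction Γ G) (γ : Γ) (e : G.E) :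
    A.Vertical ⊤ (A.actE γ e) ↔ A.Vertical ⊤ e := by
  have fwd : ∀ (γ : Γ) (e : G.E), A.Vertical ⊤ e → A.Vertical ⊤ (A.actE γ e) := by
    rintro γ e ⟨a, b, hab, δ, -, hba⟩
    refine ⟨A.actV γ a, A.actV γ b, ?_, γ * δ * γ⁻¹, Subgroup.mem_top _, ?_⟩
    · rw [A.ends_map, hab, Sym2.map_pair_eq]
    · rw [map_mul, map_mul, map_inv, Equiv.Perm.mul_apply, Equiv.Perm.mul_apply,
        Equiv.Perm.inv_def, Equiv.symm_apply_apply, hba]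
  constructor
  · intro h
    have := fwd γ⁻¹ _ h
    rwa [map_inv, Equiv.Perm.inv_def, Equiv.symm_apply_apply] at this
  · exact fwd γ e

lemma vertMult_act (A : GraphAction Γ G) (γ : Γ) (x : G.V) :
    A.vertMult ⊤ (A.actV γ x) = A.vertMult ⊤ x := by
  symm
  apply Nat.card_congr
  refine Equiv.subtypeEquiv (A.actE γ) fun e => ?_
  rw [← A.vertical_act γ e, ← A.mem_ends_act_iff γ x e]

lemma nonvert_free (A : GraphAction Γ G) (hA : A.ActsHarmonically) (e : G.E)
    (he : ¬ A.Vertical ⊤ e) (γ : Γ) (h : A.actE γ e = e) : γ = 1 := by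
  have hex : ∀ s : Sym2 G.V, ∃ a b, s = s(a, b) := fun s =>
    Sym2.ind (fun a b => ⟨a, b, rfl⟩) s
  obtain ⟨a, b, hab⟩ := hex (G.ends e)
  have hmape : Sym2.map (A.actV γ) (G.ends e) = G.ends e := by
    rw [← A.ends_map, h]
  rw [hab, Sym2.map_pair_eq, Sym2.eq_iff] at hmape
  rcases hmape with ⟨h1, h2⟩ | ⟨h1, h2⟩
  · exact A.eq_one_of_fixes hA γ a e h1 (by rw [hab]; exact Sym2.mem_mk_left _ _) h
  · exact absurd ⟨a, b, hab, γ, Subgroup.mem_top _, h1⟩ he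

/-- The action of `Γ` on the non-vertical edges. -/
def actEnv (A : GraphAction Γ G) : Γ →* Equiv.Perm {e : G.E // ¬ A.Vertical ⊤ e} where
  toFun γ := Equiv.Perm.subtypePerm (A.actE γ)
    (fun e => not_congr (A.vertical_act γ e))
  map_one' := by
    ext e
    simp [Equiv.Perm.subtypePerm_apply]
  map_mul' γ γ' := by
    ext e
    simp [Equiv.Perm.subtypePerm_apply, map_mul]
    rfl

lemma nonvert_count (A : GraphAction Γ G) (hA : A.ActsHarmonically)
    [Fintype (A.quotE ⊤)] :
    Nat.card {e : G.E // ¬ A.Vertical ⊤ e} = Nat.card (A.quotE ⊤) * Nat.card Γ := by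
  classical
  haveI : Finite Γ := A.finiteGamma
  rw [card_eq_sum_fibers
    (Quotient.mk ((A.eSetoid ⊤).comap (Subtype.val : {e : G.E // ¬ A.Vertical ⊤ e} → G.E)))]
  have hfib : ∀ q : A.quotE ⊤,
      Nat.card {s : {e : G.E // ¬ A.Vertical ⊤ e} //
        Quotient.mk ((A.eSetoid ⊤).comap
          (Subtype.val : {e : G.E // ¬ A.Vertical ⊤ e} → G.E)) s = q} = Nat.card Γ := by
    intro q
    refine fiber_card_of_free A.actEnv ?_ _ ?_ q
    · intro γ s hs
      rw [Subtype.ext_iff] at hs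
      exact A.nonvert_free hA s.val s.prop γ hs
    · intro a b
      constructor
      · rintro ⟨δ, -, hδ⟩
        exact ⟨δ, Subtype.ext hδ⟩
      · rintro ⟨δ, hδ⟩
        rw [Subtype.ext_iff] at hδ
        exact ⟨δ, Subgroup.mem_top _, hδ⟩
  rw [Finset.sum_congr rfl fun q _ => hfib q, Finset.sum_const, smul_eq_mul,
    Finset.card_univ, Nat.card_eq_fintype_card (α := A.quotE ⊤)]

lemma stabOrder_eq_card_fixV (A : GraphAction Γ G) (x : G.V) :
    A.stabOrder ⊤ x = Nat.card (A.fixV x) := by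
  apply Nat.card_congr
  exact Equiv.subtypeEquivRight fun γ => ⟨fun h => h.2, fun h => ⟨Subgroup.mem_top _, h⟩⟩

/-- The action of the stabilizer of `x` on the vertical edges at `x`. -/
def actStabVert (A : GraphAction Γ G) (x : G.V) :
    (A.fixV x) →* Equiv.Perm {e : G.E // x ∈ G.ends e ∧ A.Vertical ⊤ e} where
  toFun δ := Equiv.Perm.subtypePerm (A.actE δ.val)
    (fun e => Iff.symm <| by
      constructor
      · rintro ⟨h1, h2⟩
        refine ⟨?_, (A.vertical_act δ.val e).mpr h2⟩
        have := A.mem_ends_act δ.val h1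
        rwa [δ.prop] at this
      · rintro ⟨h1, h2⟩
        refine ⟨?_, (A.vertical_act δ.val e).mp h2⟩
        rw [A.mem_ends_act_iff δ.val x e, δ.prop]
        exact h1)
  map_one' := by
    ext e
    simp [Equiv.Perm.subtypePerm_apply]
  map_mul' γ γ' := by
    ext e
    simp [Equiv.Perm.subtypePerm_apply, map_mul]
    rfl

lemma stab_dvd_vertMult (A : GraphAction Γ G) (hA : A.ActsHarmonically) (x : G.V) :
    A.stabOrder ⊤ x ∣ A.vertMult ⊤ x := by
  classical
  haveI : Finite Γ := A.finiteGamma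
  rw [A.stabOrder_eq_card_fixV x]
  refine card_dvd_of_free (A.actStabVert x) ?_
  intro δ s hs
  rw [Subtype.ext_iff] at hs
  have : δ.val = 1 := A.eq_one_of_fixes hA δ.val x s.val δ.prop s.prop.1 hs
  exact Subtype.ext this

lemma w_mul_r (A : GraphAction Γ G) (hA : A.ActsHarmonically) (q : A.quotV ⊤) :
    A.w ⊤ q * A.r ⊤ q = A.vertMult ⊤ (Quotient.out q) :=
  Nat.div_mul_cancel (A.stab_dvd_vertMult hA (Quotient.out q))

lemma r_pos (A : GraphAction Γ G) (q : A.quotV ⊤) : 0 < A.r ⊤ q := by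
  haveI : Finite Γ := A.finiteGamma
  have : Nonempty {γ : Γ // γ ∈ (⊤ : Subgroup Γ) ∧
      A.actV γ (Quotient.out q) = Quotient.out q} :=
    ⟨⟨1, Subgroup.mem_top _, by simp⟩⟩
  exact Nat.card_pos

lemma vertex_fiber (A : GraphAction Γ G) (q : A.quotV ⊤) :
    Nat.card {x : G.V // Quotient.mk (A.vSetoid ⊤) x = q} * A.r ⊤ q = Nat.card Γ := by
  classical
  haveI : Finite Γ := A.finiteGamma
  letI : Fintype Γ := Fintype.ofFinite Γ
  letI : MulAction Γ G.V := MulAction.compHom _ A.actV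
  set b := Quotient.out q with hb
  have hsmul : ∀ (γ : Γ) (x : G.V), γ • x = A.actV γ x := fun γ x => rfl
  have hiff : ∀ x : G.V,
      Quotient.mk (A.vSetoid ⊤) x = q ↔ x ∈ MulAction.orbit Γ b := by
    intro x
    constructor
    · intro h
      obtain ⟨δ, -, hδ⟩ := Quotient.exact (h.trans (Quotient.out_eq q).symm)
      refine ⟨δ⁻¹, ?_⟩
      show A.actV δ⁻¹ b = x
      rw [map_inv, hb, ← hδ]
      exact Equiv.symm_apply_apply _ _
    · rintro ⟨γ, hγ'⟩
      have hγ : A.actV γ b = x := hγ'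
      have hrel : (A.vSetoid ⊤).r x b := by
        refine ⟨γ⁻¹, Subgroup.mem_top _, ?_⟩
        rw [map_inv, ← hγ]
        exact Equiv.symm_apply_apply _ _
      exact (Quotient.sound hrel).trans (Quotient.out_eq q)
  have e1 : {x : G.V // Quotient.mk (A.vSetoid ⊤) x = q} ≃ MulAction.orbit Γ b :=
    Equiv.subtypeEquivRight hiff
  have e2 : {γ : Γ // γ ∈ (⊤ : Subgroup Γ) ∧ A.actV γ b = b} ≃ MulAction.stabilizer Γ b :=
    Equiv.subtypeEquivRight fun γ =>
      ⟨fun h => h.2, fun h => ⟨Subgroup.mem_top _, h⟩⟩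
  have hr : A.r ⊤ q = Nat.card (MulAction.stabilizer Γ b) := Nat.card_congr e2
  rw [Nat.card_congr e1, hr, Nat.card_eq_fintype_card, Nat.card_eq_fintype_card,
    Nat.card_eq_fintype_card]
  exact MulAction.card_orbit_mul_card_stabilizer_eq_card_group Γ b

lemma vertMult_fiber_const (A : GraphAction Γ G) (q : A.quotV ⊤) (x : G.V)
    (hx : Quotient.mk (A.vSetoid ⊤) x = q) :
    A.vertMult ⊤ x = A.vertMult ⊤ (Quotient.out q) := by
  obtain ⟨δ, -, hδ⟩ := Quotient.exact (hx.trans (Quotient.out_eq q).symm)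
  rw [← hδ, A.vertMult_act]

lemma card_mem_ends (e : G.E) : Nat.card {x : G.V // x ∈ G.ends e} = 2 := by
  have hex : ∀ s : Sym2 G.V, ∃ a b, s = s(a, b) := fun s =>
    Sym2.ind (fun a b => ⟨a, b, rfl⟩) s
  obtain ⟨a, b, hab⟩ := hex (G.ends e)
  have hne : a ≠ b := fun h => G.loopless e (by rw [hab, h]; exact Sym2.mk_isDiag_iff.mpr rfl)
  have e1 : {x : G.V // x ∈ G.ends e} ≃ ({a, b} : Set G.V) :=
    Equiv.subtypeEquivRight fun x => by
      rw [hab, Sym2.mem_iff]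
      simp [Set.mem_insert_iff]
  rw [Nat.card_congr e1, Nat.card_coe_set_eq, Set.ncard_pair hne]

lemma vert_double_count (A : GraphAction Γ G) :
    ∑ x : G.V, A.vertMult ⊤ x = 2 * Nat.card {e : G.E // A.Vertical ⊤ e} := by
  classical
  have e1 : {p : G.V × G.E // p.1 ∈ G.ends p.2 ∧ A.Vertical ⊤ p.2} ≃
      Σ x : G.V, {e : G.E // x ∈ G.ends e ∧ A.Vertical ⊤ e} :=
    Equiv.subtypeProdEquivSigmaSubtype fun (x : G.V) (e : G.E) =>
      x ∈ G.ends e ∧ A.Vertical ⊤ e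
  have e2 : {p : G.V × G.E // p.1 ∈ G.ends p.2 ∧ A.Vertical ⊤ p.2} ≃
      Σ e : G.E, {x : G.V // x ∈ G.ends e ∧ A.Vertical ⊤ e} :=
    ((Equiv.prodComm G.V G.E).subtypeEquiv fun p => by
      simp only [Equiv.prodComm_apply, Prod.fst_swap, Prod.snd_swap]).trans
      (Equiv.subtypeProdEquivSigmaSubtype fun (e : G.E) (x : G.V) =>
        x ∈ G.ends e ∧ A.Vertical ⊤ e)
  have h1 : Nat.card {p : G.V × G.E // p.1 ∈ G.ends p.2 ∧ A.Vertical ⊤ p.2} =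
      ∑ x : G.V, A.vertMult ⊤ x := by
    rw [Nat.card_congr e1, Nat.card_eq_fintype_card, Fintype.card_sigma]
    exact Finset.sum_congr rfl fun x _ => (Nat.card_eq_fintype_card).symm
  have h3 : ∀ e : G.E, Nat.card {x : G.V // x ∈ G.ends e ∧ A.Vertical ⊤ e} =
      if A.Vertical ⊤ e then 2 else 0 := by
    intro e
    by_cases hv : A.Vertical ⊤ e
    · rw [if_pos hv]
      have : {x : G.V // x ∈ G.ends e ∧ A.Vertical ⊤ e} ≃ {x : G.V // x ∈ G.ends e} :=
        Equiv.subtypeEquivRight fun x => and_iff_left hv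
      rw [Nat.card_congr this, card_mem_ends]
    · rw [if_neg hv]
      haveI : IsEmpty {x : G.V // x ∈ G.ends e ∧ A.Vertical ⊤ e} :=
        ⟨fun s => hv s.prop.2⟩
      exact Nat.card_of_isEmpty
  have h2 : Nat.card {p : G.V × G.E // p.1 ∈ G.ends p.2 ∧ A.Vertical ⊤ p.2} =
      2 * Nat.card {e : G.E // A.Vertical ⊤ e} := by
    rw [Nat.card_congr e2, Nat.card_eq_fintype_card, Fintype.card_sigma]
    have : ∀ e : G.E, Fintype.card {x : G.V // x ∈ G.ends e ∧ A.Vertical ⊤ e} =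
        if A.Vertical ⊤ e then 2 else 0 := fun e => by
      rw [← Nat.card_eq_fintype_card]; exact h3 e
    rw [Finset.sum_congr rfl fun e _ => this e, ← Finset.sum_filter,
      Finset.sum_const, smul_eq_mul, ← Fintype.card_subtype, ← Nat.card_eq_fintype_card,
      mul_comm]
  rw [← h1, h2]

end GraphAction

end RiemannHurwitzProof


/-- Riemann–Hurwitz. If `Γ` acts harmonically on `G`, then
`2g(G) − 2 = |Γ|·(2g(G/Γ) − 2 + R)`. -/
theorem riemann_hurwitz {Γ : Type} [Group Γ] {G : Multigraph} (A : GraphAction Γ G)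
    (hA : A.ActsHarmonically) :
    2 * (G.genus : ℚ) - 2 =
      (Nat.card Γ : ℚ) * (2 * (A.quotGenus ⊤ : ℚ) - 2 + A.ram ⊤) := by
  classical
  haveI : Finite Γ := A.finiteGamma
  letI : Fintype (A.quotV ⊤) := Fintype.ofFinite _
  letI : Fintype (A.quotE ⊤) := Fintype.ofFinite _
  have hVq : ∀ q : A.quotV ⊤,
      Nat.card {x : G.V // Quotient.mk (A.vSetoid ⊤) x = q} * A.r ⊤ q = Nat.card Γ :=
    fun q => A.vertex_fiber q
  have hVsum : Nat.card G.V =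
      ∑ q : A.quotV ⊤, Nat.card {x : G.V // Quotient.mk (A.vSetoid ⊤) x = q} :=
    GraphAction.card_eq_sum_fibers _
  have hEnv : Nat.card {e : G.E // ¬ A.Vertical ⊤ e} = Nat.card (A.quotE ⊤) * Nat.card Γ :=
    A.nonvert_count hA
  have hEsplit : Fintype.card G.E =
      Nat.card (A.quotE ⊤) * Nat.card Γ + Nat.card {e : G.E // A.Vertical ⊤ e} := by
    rw [← Nat.card_eq_fintype_card (α := G.E), ← hEnv]
    have : Nat.card G.E =
        Nat.card {e : G.E // A.Vertical ⊤ e} + Nat.card {e : G.E // ¬ A.Vertical ⊤ e} := by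
      rw [← Nat.card_sum]
      exact (Nat.card_congr (Equiv.sumCompl _)).symm
    omega
  have hdouble := A.vert_double_count
  have hw : ∀ q : A.quotV ⊤, A.w ⊤ q * A.r ⊤ q = A.vertMult ⊤ (Quotient.out q) := A.w_mul_r hA
  have hgroup : ∑ x : G.V, A.vertMult ⊤ x =
      ∑ q : A.quotV ⊤, Nat.card {x : G.V // Quotient.mk (A.vSetoid ⊤) x = q} *
        A.vertMult ⊤ (Quotient.out q) := by
    rw [← Fintype.sum_fiberwise (Quotient.mk (A.vSetoid ⊤)) (fun x => A.vertMult ⊤ x)]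
    refine Finset.sum_congr rfl fun q _ => ?_
    have hcon : ∀ s : {x : G.V // Quotient.mk (A.vSetoid ⊤) x = q},
        A.vertMult ⊤ s.val = A.vertMult ⊤ (Quotient.out q) := fun s =>
      A.vertMult_fiber_const q s.val s.prop
    rw [Finset.sum_congr rfl fun s _ => hcon s, Finset.sum_const, smul_eq_mul,
      Finset.card_univ]
    congr 1
    exact (Nat.card_eq_fintype_card).symm
  have hrq : ∀ q : A.quotV ⊤, (A.r ⊤ q : ℚ) ≠ 0 :=
    fun q => Nat.cast_ne_zero.mpr (A.r_pos q).ne'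
  have key : ∀ q : A.quotV ⊤,
      (Nat.card Γ : ℚ) * (2 * (1 - 1 / (A.r ⊤ q : ℚ)) + (A.w ⊤ q : ℚ)) =
      2 * (Nat.card Γ : ℚ) -
        2 * (Nat.card {x : G.V // Quotient.mk (A.vSetoid ⊤) x = q} : ℚ) +
        (Nat.card {x : G.V // Quotient.mk (A.vSetoid ⊤) x = q} : ℚ) *
          (A.vertMult ⊤ (Quotient.out q) : ℚ) := by
    intro q
    have h1 : (Nat.card {x : G.V // Quotient.mk (A.vSetoid ⊤) x = q} : ℚ) * (A.r ⊤ q : ℚ) =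
        (Nat.card Γ : ℚ) := by exact_mod_cast hVq q
    have h2 : (A.w ⊤ q : ℚ) * (A.r ⊤ q : ℚ) = (A.vertMult ⊤ (Quotient.out q) : ℚ) := by
      exact_mod_cast hw q
    have h3 : (Nat.card Γ : ℚ) / (A.r ⊤ q : ℚ) =
        (Nat.card {x : G.V // Quotient.mk (A.vSetoid ⊤) x = q} : ℚ) := by
      rw [div_eq_iff (hrq q)]
      exact h1.symm
    have h4 : (Nat.card Γ : ℚ) * (A.w ⊤ q : ℚ) =
        (Nat.card {x : G.V // Quotient.mk (A.vSetoid ⊤) x = q} : ℚ) *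
          (A.vertMult ⊤ (Quotient.out q) : ℚ) := by
      calc (Nat.card Γ : ℚ) * (A.w ⊤ q : ℚ)
          = (Nat.card {x : G.V // Quotient.mk (A.vSetoid ⊤) x = q} : ℚ) *
            ((A.w ⊤ q : ℚ) * (A.r ⊤ q : ℚ)) := by rw [← h1]; ring
        _ = _ := by rw [h2]
    calc (Nat.card Γ : ℚ) * (2 * (1 - 1 / (A.r ⊤ q : ℚ)) + (A.w ⊤ q : ℚ))
        = 2 * (Nat.card Γ : ℚ) - 2 * ((Nat.card Γ : ℚ) / (A.r ⊤ q : ℚ)) +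
          (Nat.card Γ : ℚ) * (A.w ⊤ q : ℚ) := by ring
      _ = _ := by rw [h3, h4]
  have hA1 : ∑ q : A.quotV ⊤,
      (Nat.card {x : G.V // Quotient.mk (A.vSetoid ⊤) x = q} : ℚ) =
      (Fintype.card G.V : ℚ) := by
    rw [← Nat.card_eq_fintype_card (α := G.V)]
    exact_mod_cast hVsum.symm
  have hA2 : ∑ q : A.quotV ⊤,
      (Nat.card {x : G.V // Quotient.mk (A.vSetoid ⊤) x = q} : ℚ) *
        (A.vertMult ⊤ (Quotient.out q) : ℚ) =
      2 * (Nat.card {e : G.E // A.Vertical ⊤ e} : ℚ) := by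
    exact_mod_cast (hgroup.symm.trans hdouble)
  have hsumkey : (Nat.card Γ : ℚ) *
      (∑ q : A.quotV ⊤, (2 * (1 - 1 / (A.r ⊤ q : ℚ)) + (A.w ⊤ q : ℚ))) =
      2 * (Nat.card Γ : ℚ) * (Nat.card (A.quotV ⊤) : ℚ) - 2 * (Fintype.card G.V : ℚ) +
        2 * (Nat.card {e : G.E // A.Vertical ⊤ e} : ℚ) := by
    rw [Finset.mul_sum, Finset.sum_congr rfl fun q _ => key q, Finset.sum_add_distrib,
      Finset.sum_sub_distrib, Finset.sum_const, Finset.card_univ, nsmul_eq_mul,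
      ← Finset.mul_sum, hA1, hA2, Nat.card_eq_fintype_card (α := A.quotV ⊤)]
    ring
  have hc1 : (Fintype.card G.E : ℚ) =
      (Nat.card (A.quotE ⊤) : ℚ) * (Nat.card Γ : ℚ) +
        (Nat.card {e : G.E // A.Vertical ⊤ e} : ℚ) := by
    exact_mod_cast hEsplit
  simp only [Multigraph.genus, GraphAction.quotGenus, GraphAction.ram]
  rw [finsum_eq_sum_of_fintype]
  push_cast
  linear_combination 2 * hc1 - hsumkey
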